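/- arXiv:0801.0120 — 2 statements merged into one kernel-verified Lean document; each statement's English description precedes it below -/
import Mathlib

section
/- There is no currency A = (1, a_1, a_2, a_3, a_4, a_5, a_6) with the following pattern of orderliness of its prefixes: the prefixes (1), (1, a_1) and (1, a_1, a_2) are orderly, the prefix (1, a_1, a_2, a_3) is not orderly, the prefix (1, a_1, a_2, a_3, a_4) is orderly, the prefix (1, a_1, a_2, a_3, a_4, a_5) is not orderly, and A itself is orderly. -/
/-- The largest coin of the currency with coins `a 0, …, a k` that is `≤ c`
(or `0` if there is none). -/
def bestCoin (a : ℕ → ℕ) (k : ℕ) (c : ℕ) : ℕ :=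
  ((Finset.range (k + 1)).filter fun j => a j ≤ c).sup a

/-- The number of coins used by the greedy algorithm to pay the amount `c`,
using the currency with coins `a 0, …, a k`. -/
def grd (a : ℕ → ℕ) (k : ℕ) : ℕ → ℕ
  | 0 => 0
  | c + 1 =>
    if h : 1 ≤ bestCoin a k (c + 1) then
      grd a k (c + 1 - bestCoin a k (c + 1)) + 1
    else 0
  decreasing_by omega

/-- The minimal number of coins needed to pay the amount `c`,
using the currency with coins `a 0, …, a k`. -/
noncomputable def opt (a : ℕ → ℕ) (k : ℕ) (c : ℕ) : ℕ :=
  sInf {n | ∃ x : Fin (k + 1) → ℕ, (∑ i, x i) = n ∧ (∑ i, x i * a i.1) = c}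

/-- `a 0, …, a k` is a currency: it starts with the coin `1` and is strictly increasing. -/
def IsCurrency (a : ℕ → ℕ) (k : ℕ) : Prop :=
  a 0 = 1 ∧ ∀ i j : ℕ, i < j → j ≤ k → a i < a j

/-- The currency with coins `a 0, …, a k` is orderly: the greedy payment is
optimal for every positive amount. -/
def Orderly (a : ℕ → ℕ) (k : ℕ) : Prop :=
  ∀ c : ℕ, 0 < c → opt a k c = grd a k c

/-- The set `𝒜(a) = ⋃_{m ≥ 1} {m·a − l : 0 ≤ l ≤ m}`. -/
def calA (a : ℕ) : Set ℕ :=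
  {x | ∃ m l : ℕ, 1 ≤ m ∧ l ≤ m ∧ x = m * a - l}

/-- representation predicate -/
def MyRep (a : ℕ → ℕ) (k c n : ℕ) : Prop :=
  ∃ x : Fin (k + 1) → ℕ, (∑ i, x i) = n ∧ (∑ i, x i * a i.1) = c

section General
variable {a : ℕ → ℕ}

lemma grd_zero (k : ℕ) : grd a k 0 = 0 := by rw [grd]

lemma grd_succ (k c : ℕ) : grd a k (c+1) =
    if 1 ≤ bestCoin a k (c + 1) then grd a k (c + 1 - bestCoin a k (c + 1)) + 1 else 0 := by
  rw [grd]; split <;> simp_all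

lemma bestCoin_eq (h0 : a 0 = 1) (hmono : ∀ i j : ℕ, i < j → j ≤ 6 → a i < a j)
    {k j c : ℕ} (hk : k ≤ 6) (hj : j ≤ k) (hle : a j ≤ c)
    (hgt : ∀ i, j < i → i ≤ k → c < a i) : bestCoin a k c = a j := by
  unfold bestCoin
  apply le_antisymm
  · apply Finset.sup_le
    intro i hi
    simp only [Finset.mem_filter, Finset.mem_range] at hi
    rcases lt_trichotomy i j with h | h | h
    · exact le_of_lt (hmono i j h (le_trans hj hk))
    · exact h ▸ le_refl _
    · exact absurd (hgt i h (by omega)) (by omega)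
  · apply Finset.le_sup
    simp only [Finset.mem_filter, Finset.mem_range]
    exact ⟨by omega, hle⟩

lemma grd_step (h0 : a 0 = 1) (hmono : ∀ i j : ℕ, i < j → j ≤ 6 → a i < a j)
    {k j c : ℕ} (hk : k ≤ 6) (hj : j ≤ k) (hle : a j ≤ c)
    (hgt : ∀ i, j < i → i ≤ k → c < a i) :
    grd a k c = grd a k (c - a j) + 1 := by
  have haj : 1 ≤ a j := by
    rcases Nat.eq_zero_or_pos j with h | h
    · subst h; omega
    · have := hmono 0 j h (le_trans hj hk); omega
  obtain ⟨c', rfl⟩ : ∃ c', c = c' + 1 := ⟨c - 1, by omega⟩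
  rw [grd_succ, bestCoin_eq h0 hmono hk hj hle hgt, if_pos haj]

lemma bestCoin_mem (h0 : a 0 = 1) {k c : ℕ} (hc : 1 ≤ c) :
    ∃ j, j ≤ k ∧ a j = bestCoin a k c ∧ a j ≤ c ∧ 1 ≤ bestCoin a k c := by
  have h0mem : (0:ℕ) ∈ (Finset.range (k+1)).filter fun j => a j ≤ c := by
    simp only [Finset.mem_filter, Finset.mem_range]
    exact ⟨by omega, by omega⟩
  obtain ⟨j, hj, hsup⟩ := Finset.exists_mem_eq_sup _ ⟨0, h0mem⟩ a
  simp only [Finset.mem_filter, Finset.mem_range] at hj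
  refine ⟨j, by omega, hsup.symm, hj.2, ?_⟩
  rw [← hsup] at *
  calc 1 = a 0 := h0.symm
  _ ≤ _ := Finset.le_sup h0mem

lemma grd_pos (h0 : a 0 = 1) {k c : ℕ} (hc : 0 < c) : 0 < grd a k c := by
  obtain ⟨c', rfl⟩ : ∃ c', c = c' + 1 := ⟨c - 1, by omega⟩
  obtain ⟨j, _, _, _, hb⟩ := bestCoin_mem h0 (k := k) hc
  rw [grd_succ, if_pos hb]
  exact Nat.succ_pos _

lemma grd_rep (h0 : a 0 = 1) (k : ℕ) : ∀ c, MyRep a k c (grd a k c) := by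
  intro c
  induction c using Nat.strong_induction_on with
  | _ c ih =>
    rcases Nat.eq_zero_or_pos c with rfl | hc
    · exact ⟨0, by simp [grd_zero], by simp⟩
    obtain ⟨j, hjk, hja, hjle, hb⟩ := bestCoin_mem h0 (k := k) hc
    obtain ⟨c', rfl⟩ : ∃ c', c = c' + 1 := ⟨c - 1, by omega⟩
    have hstep : grd a k (c' + 1) = grd a k (c' + 1 - a j) + 1 := by
      rw [grd_succ, if_pos hb, hja]
    have haj : 1 ≤ a j := by rw [hja]; exact hb
    obtain ⟨x, hxs, hxv⟩ := ih (c' + 1 - a j) (by omega)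
    set J : Fin (k+1) := ⟨j, by omega⟩
    refine ⟨fun i => x i + (if i = J then 1 else 0), ?_, ?_⟩
    · rw [Finset.sum_add_distrib, hxs, Finset.sum_ite_eq' Finset.univ J (fun _ => 1),
        if_pos (Finset.mem_univ J), hstep]
    · have : ∀ i : Fin (k+1), (x i + (if i = J then 1 else 0)) * a i.1
          = x i * a i.1 + (if i = J then a i.1 else 0) := by
        intro i; split <;> ring
      rw [Finset.sum_congr rfl (fun i _ => this i), Finset.sum_add_distrib, hxv,
        Finset.sum_ite_eq' Finset.univ J (fun i : Fin (k+1) => a i.1),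
        if_pos (Finset.mem_univ J)]
      show c' + 1 - a j + a j = c' + 1
      omega

lemma opt_le_of_rep {k c n : ℕ} (h : MyRep a k c n) : opt a k c ≤ n := Nat.sInf_le h

lemma orderly_le {k c n : ℕ} (h : Orderly a k) (hc : 0 < c) (hr : MyRep a k c n) :
    grd a k c ≤ n := by
  rw [← h c hc]; exact opt_le_of_rep hr

lemma not_orderly_ce (h0 : a 0 = 1) {k : ℕ} (h : ¬ Orderly a k) :
    ∃ c n, 0 < c ∧ MyRep a k c n ∧ n < grd a k c := by
  rw [Orderly] at h
  push_neg at h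
  obtain ⟨c, hc, hne⟩ := h
  have hle : opt a k c ≤ grd a k c := opt_le_of_rep (grd_rep h0 k c)
  have hlt : opt a k c < grd a k c := lt_of_le_of_ne hle hne
  have hmem : opt a k c ∈ {n | ∃ x : Fin (k + 1) → ℕ,
      (∑ i, x i) = n ∧ (∑ i, x i * a i.1) = c} :=
    Nat.sInf_mem ⟨grd a k c, grd_rep h0 k c⟩
  exact ⟨c, opt a k c, hc, hmem, hlt⟩

lemma rep_extend {k c n : ℕ} (h : MyRep a k c n) : MyRep a (k+1) c n := by
  obtain ⟨x, hxs, hxv⟩ := h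
  refine ⟨Fin.snoc x 0, ?_, ?_⟩
  · rw [Fin.sum_univ_castSucc]; simp [Fin.snoc_castSucc, hxs]
  · rw [Fin.sum_univ_castSucc, ← hxv]
    simp only [Fin.snoc_last, Nat.zero_mul, Nat.add_zero, zero_mul, add_zero]
    exact Finset.sum_congr rfl (fun i _ => by rw [Fin.snoc_castSucc]; rfl)

lemma grd_agree (h0 : a 0 = 1) {k : ℕ} : ∀ {c : ℕ}, c < a (k+1) →
    grd a (k+1) c = grd a k c := by
  intro c
  induction c using Nat.strong_induction_on with
  | _ c ih =>
    intro hlt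
    rcases Nat.eq_zero_or_pos c with rfl | hc
    · simp [grd_zero]
    have hbc : bestCoin a (k+1) c = bestCoin a k c := by
      unfold bestCoin
      congr 1
      ext i
      simp only [Finset.mem_filter, Finset.mem_range]
      constructor
      · rintro ⟨h1, h2⟩
        refine ⟨?_, h2⟩
        rcases Nat.lt_or_ge i (k+1) with h | h
        · exact h
        · have : i = k+1 := by omega
          subst this; omega
      · rintro ⟨h1, h2⟩; exact ⟨by omega, h2⟩
    obtain ⟨c', rfl⟩ : ∃ c', c = c' + 1 := ⟨c - 1, by omega⟩
    obtain ⟨j, hjk, hja, hjle, hb⟩ := bestCoin_mem h0 (k := k) hc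
    rw [grd_succ, grd_succ, hbc, if_pos hb, if_pos hb]
    congr 1
    exact ih _ (by omega) (by omega)

/-- a value with greedy count ≤ 1 is a coin -/
lemma coin_of_grd_le_one (h0 : a 0 = 1) {k c : ℕ} (hc : 0 < c)
    (h : grd a k c ≤ 1) : ∃ j, j ≤ k ∧ a j = c := by
  obtain ⟨c', rfl⟩ : ∃ c', c = c' + 1 := ⟨c - 1, by omega⟩
  obtain ⟨j, hjk, hja, hjle, hb⟩ := bestCoin_mem h0 (k := k) hc
  rw [grd_succ, if_pos hb] at h
  have h2 : grd a k (c' + 1 - bestCoin a k (c'+1)) = 0 := by omega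
  have h3 : c' + 1 - bestCoin a k (c'+1) = 0 := by
    by_contra h4
    exact absurd h2 (by have := grd_pos h0 (k := k) (c := c' + 1 - bestCoin a k (c'+1)) (by omega); omega)
  refine ⟨j, hjk, ?_⟩
  rw [← hja] at *
  omega

lemma grd_small (h0 : a 0 = 1) (hmono : ∀ i j : ℕ, i < j → j ≤ 6 → a i < a j)
    {k : ℕ} (hk1 : 1 ≤ k) (hk : k ≤ 6) : ∀ {c : ℕ}, c < a 1 → grd a k c = c := by
  intro c
  induction c using Nat.strong_induction_on with
  | _ c ih =>
    intro hlt
    rcases Nat.eq_zero_or_pos c with rfl | hc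
    · simp [grd_zero]
    have hstep := grd_step h0 hmono (j := 0) (c := c) hk (by omega) (by omega)
      (fun i hi hik => lt_of_lt_of_le hlt (by
        rcases Nat.eq_or_lt_of_le hi with h | h
        · exact h ▸ le_refl _
        · exact le_of_lt (hmono 1 i (by omega) (by omega))))
    rw [hstep, h0, ih (c-1) (by omega) (by omega)]
    omega

lemma grd_p (h0 : a 0 = 1) (hmono : ∀ i j : ℕ, i < j → j ≤ 6 → a i < a j)
    {k : ℕ} (hk1 : 2 ≤ k) (hk : k ≤ 6) : ∀ {c : ℕ}, c < a 2 →
    grd a k c = c / a 1 + c % a 1 := by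
  have hp : 1 < a 1 := by have := hmono 0 1 (by omega) (by omega); omega
  intro c
  induction c using Nat.strong_induction_on with
  | _ c ih =>
    intro hlt
    rcases Nat.lt_or_ge c (a 1) with h | h
    · rw [grd_small h0 hmono (by omega) hk h, Nat.div_eq_of_lt h, Nat.mod_eq_of_lt h]
      omega
    have hstep := grd_step h0 hmono (j := 1) (c := c) hk (by omega) h
      (fun i hi hik => lt_of_lt_of_le hlt (by
        rcases Nat.eq_or_lt_of_le hi with h' | h'
        · exact h' ▸ le_refl _
        · exact le_of_lt (hmono 2 i (by omega) (by omega))))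
    rw [hstep, ih (c - a 1) (by omega) (by omega)]
    obtain ⟨d, rfl⟩ : ∃ d, c = d + a 1 := ⟨c - a 1, by omega⟩
    rw [Nat.add_sub_cancel, Nat.add_div_right _ (by omega), Nat.add_mod_right]
    omega

end General

section Witness
variable {a : ℕ → ℕ}

lemma sum_update_pred {m : ℕ} (x v : Fin m → ℕ) (i0 : Fin m) (h : x i0 ≠ 0) :
    (∑ i, Function.update x i0 (x i0 - 1) i * v i) + v i0 = ∑ i, x i * v i := by
  rw [← Finset.add_sum_erase Finset.univ (fun i => x i * v i) (Finset.mem_univ i0),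
    ← Finset.add_sum_erase Finset.univ (fun i => Function.update x i0 (x i0 - 1) i * v i)
      (Finset.mem_univ i0)]
  have h1 : ∑ j ∈ Finset.univ.erase i0, Function.update x i0 (x i0 - 1) j * v j
      = ∑ j ∈ Finset.univ.erase i0, x j * v j :=
    Finset.sum_congr rfl (fun j hj => by
      rw [Function.update_of_ne (Finset.mem_erase.1 hj).1])
  rw [h1, Function.update_self]
  have : (x i0 - 1) * v i0 + v i0 = x i0 * v i0 := by
    conv_rhs => rw [← Nat.sub_add_cancel (Nat.one_le_iff_ne_zero.2 h)]
    ring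
  omega

lemma sum_update_pred' {m : ℕ} (x : Fin m → ℕ) (i0 : Fin m) (h : x i0 ≠ 0) :
    (∑ i, Function.update x i0 (x i0 - 1) i) + 1 = ∑ i, x i := by
  have := sum_update_pred x (fun _ => 1) i0 h
  simpa using this

lemma subrep {m B T : ℕ} (hB : 0 < B) (v : Fin m → ℕ) :
    ∀ N (x : Fin m → ℕ), (∑ i, x i) = N → (∀ i, x i ≠ 0 → v i ≤ B) →
    T ≤ ∑ i, x i * v i →
    ∃ y : Fin m → ℕ, (∀ i, y i ≤ x i) ∧ T ≤ ∑ i, y i * v i ∧ ∑ i, y i * v i < T + B := by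
  intro N
  induction N using Nat.strong_induction_on with
  | _ N ih =>
    intro x hN hbound hT
    rcases Nat.lt_or_ge (∑ i, x i * v i) (T + B) with h | h
    · exact ⟨x, fun i => le_refl _, hT, h⟩
    · have hpos : 0 < ∑ i, x i * v i := by omega
      have hex : ∃ i, x i * v i ≠ 0 := by
        by_contra hall; push_neg at hall
        have : ∑ i, x i * v i = 0 := Finset.sum_eq_zero (fun i _ => hall i)
        omega
      obtain ⟨i0, hi0⟩ := hex
      have hx0 : x i0 ≠ 0 := by intro h'; rw [h'] at hi0; simp at hi0
      set x' := Function.update x i0 (x i0 - 1) with hx'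
      have hv := sum_update_pred x v i0 hx0
      have hs := sum_update_pred' x i0 hx0
      rw [← hx'] at hv hs
      have hvB : v i0 ≤ B := hbound i0 hx0
      have hN1 : 1 ≤ N := by
        have : x i0 ≤ ∑ i, x i := Finset.single_le_sum (fun i _ => Nat.zero_le _)
          (Finset.mem_univ i0)
        omega
      have hbound' : ∀ i, x' i ≠ 0 → v i ≤ B := by
        intro i hi
        rcases eq_or_ne i i0 with rfl | hne
        · exact hvB
        · exact hbound i (by rwa [hx', Function.update_of_ne hne] at hi)
      have hT' : T ≤ ∑ i, x' i * v i := by omega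
      obtain ⟨y, hy1, hy2, hy3⟩ := ih (N - 1) (by omega) x' (by omega) hbound' hT'
      refine ⟨y, fun i => ?_, hy2, hy3⟩
      calc y i ≤ x' i := hy1 i
      _ ≤ x i := by
        rcases eq_or_ne i i0 with rfl | hne
        · rw [hx', Function.update_self]; omega
        · rw [hx', Function.update_of_ne hne]

lemma exists_witness (h0 : a 0 = 1) (hmono : ∀ i j : ℕ, i < j → j ≤ 6 → a i < a j)
    {kk : ℕ} (hk6 : kk + 2 ≤ 6)
    (hup : Orderly a (kk+2)) (hbad : ¬ Orderly a (kk+1)) :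
    ∃ w n, a (kk+2) ≤ w ∧ w < a (kk+1) + a kk ∧ MyRep a kk w n ∧
      n ≤ grd a (kk+1) (w - a (kk+1)) := by
  have hcoinpos : ∀ j, j ≤ 6 → 1 ≤ a j := by
    intro j hj
    rcases Nat.eq_zero_or_pos j with rfl | h
    · omega
    · have := hmono 0 j h hj; omega
  have haK : 1 ≤ a (kk+1) := hcoinpos _ (by omega)
  have hakk : 1 ≤ a kk := hcoinpos _ (by omega)
  set S : Set ℕ := {c | 0 < c ∧ ∃ n, MyRep a (kk+1) c n ∧ n < grd a (kk+1) c} with hS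
  have hSne : S.Nonempty := by
    obtain ⟨c, n, hc, hr, hlt⟩ := not_orderly_ce h0 hbad
    exact ⟨c, hc, n, hr, hlt⟩
  obtain ⟨hw0, n, ⟨x, hxs, hxv⟩, hlt⟩ := Nat.sInf_mem hSne
  set w := sInf S with hwdef
  have hmin : ∀ c, 0 < c → c < w → ∀ m, MyRep a (kk+1) c m → grd a (kk+1) c ≤ m := by
    intro c hc hcw m hm
    by_contra hcon
    exact Nat.notMem_of_lt_sInf hcw ⟨hc, m, hm, by omega⟩
  have hn1 : 1 ≤ n := by
    rcases Nat.eq_zero_or_pos n with rfl | h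
    · exfalso
      have : ∀ i, x i = 0 := by
        intro i
        have := (Finset.sum_eq_zero_iff.1 hxs) i (Finset.mem_univ i)
        exact this
      have : (∑ i, x i * a i.1) = 0 := Finset.sum_eq_zero (fun i _ => by rw [this i]; ring)
      omega
    · exact h
  have htopstep : ∀ c, a (kk+1) ≤ c → grd a (kk+1) c = grd a (kk+1) (c - a (kk+1)) + 1 :=
    fun c hc => grd_step h0 hmono (by omega) (le_refl _) hc (fun i h1 h2 => by omega)
  set L : Fin (kk+2) := Fin.last (kk+1) with hL
  have hLval : (L : ℕ) = kk + 1 := rfl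
  have hxL : x L = 0 := by
    by_contra hxL
    have hwge : a (kk+1) ≤ w := by
      have h1 : x L * a (L : ℕ) ≤ ∑ i, x i * a i.1 :=
        Finset.single_le_sum (f := fun i : Fin (kk+2) => x i * a i.1)
          (fun i _ => Nat.zero_le _) (Finset.mem_univ L)
      rw [hLval] at h1
      have hx1 : 1 ≤ x L := by omega
      have h2 : a (kk+1) ≤ x L * a (kk+1) := Nat.le_mul_of_pos_left _ (by omega)
      omega
    have hstep := htopstep w hwge
    rcases Nat.lt_or_ge (a (kk+1)) w with hlt2 | hge2
    · -- w - aK > 0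
      have hv : (∑ i, Function.update x L (x L - 1) i * a i.1) + a (kk+1)
          = ∑ i, x i * a i.1 := by
        simpa [hLval] using sum_update_pred x (fun i => a i.1) L hxL
      have hs := sum_update_pred' x L hxL
      have hrep : MyRep a (kk+1) (w - a (kk+1)) (n - 1) :=
        ⟨Function.update x L (x L - 1), by omega, by omega⟩
      have := hmin (w - a (kk+1)) (by omega) (by omega) (n-1) hrep
      omega
    · -- w ≤ aK so w - aK = 0, grd w = 1
      have : w - a (kk+1) = 0 := by omega
      rw [this, grd_zero] at hstep
      omega
  -- restricted rep
  have hrepkk : MyRep a kk w n := by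
    refine ⟨fun i => x i.castSucc, ?_, ?_⟩
    · rw [Fin.sum_univ_castSucc] at hxs
      rw [← hxs, hxL]; simp
    · rw [Fin.sum_univ_castSucc] at hxv
      rw [← hxv, hxL]; simp
  have hwge2 : a (kk+2) ≤ w := by
    by_contra hcon
    push_neg at hcon
    have hagree : grd a (kk+2) w = grd a (kk+1) w := grd_agree h0 hcon
    have := orderly_le hup hw0 (rep_extend ⟨x, hxs, hxv⟩)
    omega
  have hwaK : a (kk+1) ≤ w := le_trans (le_of_lt (hmono (kk+1) (kk+2) (by omega) hk6)) hwge2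
  have hKZ : w < a (kk+1) + a kk := by
    by_contra hge
    push_neg at hge
    have hbound : ∀ i : Fin (kk+2), x i ≠ 0 → a i.1 ≤ a kk := by
      intro i hi
      have hiL : i ≠ L := by intro h; rw [h, hxL] at hi; exact hi rfl
      have hival : (i : ℕ) < kk + 1 := by
        have := i.2
        rcases Nat.lt_or_ge (i : ℕ) (kk+1) with h | h
        · exact h
        · exfalso; apply hiL; apply Fin.ext; rw [hLval]; omega
      rcases Nat.lt_or_ge (i : ℕ) kk with h | h
      · exact le_of_lt (hmono _ _ h (by omega))
      · have : (i : ℕ) = kk := by omega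
        rw [this]
    obtain ⟨y, hyx, hT1, hT2⟩ := subrep (T := a (kk+1)) (by omega : 0 < a kk)
      (fun i : Fin (kk+2) => a i.1) (∑ i, x i) x rfl hbound
      (by simpa only [hxv] using hwaK)
    set s := ∑ i, y i * a i.1 with hsdef
    have hsltw : s < w := by omega
    have hs0 : 0 < s := by omega
    have hny : grd a (kk+1) s ≤ ∑ i, y i := hmin s hs0 hsltw _ ⟨y, rfl, rfl⟩
    have hsstep := htopstep s (by omega)
    obtain ⟨z, hzs, hzv⟩ := grd_rep h0 (kk+1) (s - a (kk+1))
    -- combined rep of w - aK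
    have e1 : (∑ i, (x i - y i)) + (∑ i, y i) = n := by
      rw [← Finset.sum_add_distrib, ← hxs]
      exact Finset.sum_congr rfl (fun i _ => by have := hyx i; omega)
    have e2 : (∑ i, (x i - y i) * a i.1) + s = w := by
      rw [hsdef, ← Finset.sum_add_distrib, ← hxv]
      refine Finset.sum_congr rfl (fun i _ => ?_)
      have := hyx i
      rw [← Nat.add_mul]
      congr 1
      omega
    have hcomb : MyRep a (kk+1) (w - a (kk+1))
        ((∑ i, (x i - y i)) + grd a (kk+1) (s - a (kk+1))) := by
      refine ⟨fun i => (x i - y i) + z i, ?_, ?_⟩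
      · rw [Finset.sum_add_distrib, hzs]
      · rw [Finset.sum_congr rfl (fun i (_ : i ∈ Finset.univ) => Nat.add_mul (x i - y i) (z i) (a i.1)),
          Finset.sum_add_distrib, hzv]
        omega
    have hny1 : 1 ≤ ∑ i, y i := by
      have := grd_pos h0 (k := kk+1) hs0
      omega
    have hle2 := hmin (w - a (kk+1)) (by omega) (by omega) _ hcomb
    have := htopstep w hwaK
    omega
  have hfinal : n ≤ grd a (kk+1) (w - a (kk+1)) := by
    have := htopstep w hwaK
    omega
  exact ⟨w, n, hwge2, hKZ, hrepkk, hfinal⟩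

end Witness

section Extra
variable {a : ℕ → ℕ}

lemma rep_pair {k : ℕ} (i j : Fin (k+1)) : MyRep a k (a i.1 + a j.1) 2 := by
  refine ⟨fun t => (if t = i then 1 else 0) + (if t = j then 1 else 0), ?_, ?_⟩
  · rw [Finset.sum_add_distrib, Finset.sum_ite_eq' Finset.univ i (fun _ => (1:ℕ)),
      Finset.sum_ite_eq' Finset.univ j (fun _ => (1:ℕ)),
      if_pos (Finset.mem_univ i), if_pos (Finset.mem_univ j)]
  · have : ∀ t : Fin (k+1), ((if t = i then 1 else 0) + (if t = j then 1 else 0)) * a t.1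
        = (if t = i then a t.1 else 0) + (if t = j then a t.1 else 0) := by
      intro t
      split <;> split <;> ring
    rw [Finset.sum_congr rfl (fun t _ => this t), Finset.sum_add_distrib,
      Finset.sum_ite_eq' Finset.univ i (fun t : Fin (k+1) => a t.1),
      Finset.sum_ite_eq' Finset.univ j (fun t : Fin (k+1) => a t.1),
      if_pos (Finset.mem_univ i), if_pos (Finset.mem_univ j)]

lemma below_top (h0 : a 0 = 1) {k c m : ℕ} (hup : Orderly a (k+1)) (hc : 0 < c)
    (hlt : c < a (k+1)) (hr : MyRep a k c m) : grd a k c ≤ m := by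
  have := orderly_le hup hc (rep_extend hr)
  rwa [grd_agree h0 hlt] at this

lemma gmin {p : ℕ} (hp : 0 < p) (q r x : ℕ) (h : x = q * p + r) : x / p + x % p ≤ q + r := by
  subst h
  have h1 : (q * p + r) / p = q + r / p := by rw [mul_comm, Nat.mul_add_div hp]
  have h2 : (q * p + r) % p = r % p := by rw [mul_comm, Nat.mul_add_mod]
  have h5 : r / p + r % p ≤ r := by
    conv_rhs => rw [← Nat.div_add_mod r p]
    have h6 : r / p ≤ p * (r / p) := Nat.le_mul_of_pos_left _ hp
    omega
  omega

lemma geval {p : ℕ} (q r x : ℕ) (hr : r < p) (h : x = q * p + r) : x / p + x % p = q + r := by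
  subst h
  have h1 : (q * p + r) / p = q + r / p := by rw [mul_comm, Nat.mul_add_div (by omega)]
  have h2 : (q * p + r) % p = r % p := by rw [mul_comm, Nat.mul_add_mod]
  rw [h1, h2, Nat.div_eq_of_lt hr, Nat.mod_eq_of_lt hr]
  omega

/-- a coin value below `a 2` equals `1` or `a 1` -/
lemma small_coin (h0 : a 0 = 1) (hmono : ∀ i j : ℕ, i < j → j ≤ 6 → a i < a j)
    {k j r : ℕ} (hk : k ≤ 6) (hjk : j ≤ k) (hj : a j = r) (hr : r < a 2) :
    r = 1 ∨ r = a 1 := by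
  rcases Nat.lt_or_ge j 1 with h | h
  · left
    have hj0 : j = 0 := by omega
    rw [hj0, h0] at hj
    omega
  rcases Nat.lt_or_ge j 2 with h' | h'
  · right; have : j = 1 := by omega
    rw [← hj, this]
  · exfalso
    have : a 2 ≤ a j := by
      rcases Nat.eq_or_lt_of_le h' with h'' | h''
      · rw [← h'']
      · exact le_of_lt (hmono 2 j h'' (by omega))
    omega

/-- a coin value below `a 3` equals `1`, `a 1` or `a 2` -/
lemma small_coin3 (h0 : a 0 = 1) (hmono : ∀ i j : ℕ, i < j → j ≤ 6 → a i < a j)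
    {k j r : ℕ} (hk : k ≤ 6) (hjk : j ≤ k) (hj : a j = r) (hr : r < a 3) :
    r = 1 ∨ r = a 1 ∨ r = a 2 := by
  rcases Nat.lt_or_ge r (a 2) with h | h
  · rcases small_coin h0 hmono hk hjk hj h with h' | h'
    · exact Or.inl h'
    · exact Or.inr (Or.inl h')
  · right; right
    rcases Nat.lt_or_ge j 3 with h' | h'
    · rcases Nat.lt_or_ge j 2 with h'' | h''
      · exfalso
        have : a j ≤ a 1 := by
          rcases Nat.lt_or_ge j 1 with h3 | h3
          · have : j = 0 := by omega
            rw [this, h0]; have := hmono 0 1 (by omega) (by omega); omega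
          · have : j = 1 := by omega
            rw [this]
        have := hmono 1 2 (by omega) (by omega)
        omega
      · have : j = 2 := by omega
        rw [← hj, this]
    · exfalso
      have : a 3 ≤ a j := by
        rcases Nat.eq_or_lt_of_le h' with h'' | h''
        · rw [← h'']
        · exact le_of_lt (hmono 3 j h'' (by omega))
      omega

end Extra

section PhaseA
variable {a : ℕ → ℕ}

lemma phaseA (h0 : a 0 = 1) (hmono : ∀ i j : ℕ, i < j → j ≤ 6 → a i < a j)
    (h2 : Orderly a 2) (h3 : ¬ Orderly a 3) (h4 : Orderly a 4) :
    a 1 = 2 ∧ a 3 = a 2 + 1 ∧ a 4 = 2 * a 2 ∧ 4 ≤ a 2 := by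
  have hp2 : 2 ≤ a 1 := by have := hmono 0 1 (by omega) (by omega); omega
  have hpb : a 1 < a 2 := hmono 1 2 (by omega) (by omega)
  have hbd : a 2 < a 3 := hmono 2 3 (by omega) (by omega)
  have hde : a 3 < a 4 := hmono 3 4 (by omega) (by omega)
  have hppos : 0 < a 1 := by omega
  obtain ⟨w, n, hwe, hwub, hrep2, hn⟩ := exists_witness (kk := 2) h0 hmono (by norm_num) h4 h3
  norm_num at hwe hwub hn
  have hwd : w - a 3 < a 2 := by omega
  have hgw : grd a 3 (w - a 3) = (w - a 3) / a 1 + (w - a 3) % a 1 :=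
    grd_p h0 hmono (by omega) (by omega) hwd
  have hA2 : grd a 2 w ≤ n := orderly_le h2 (by omega) hrep2
  -- Test 1 : amount a3 + a2 in the 4-coin system
  have hT1 : grd a 4 (a 3 + a 2) ≤ 2 := by
    have := orderly_le h4 (c := a 3 + a 2) (by omega)
      (rep_pair (k := 4) ⟨3, by omega⟩ ⟨2, by omega⟩)
    exact this
  have hs1 : grd a 4 (a 3 + a 2) = grd a 4 (a 3 + a 2 - a 4) + 1 :=
    grd_step h0 hmono (by omega) (le_refl 4) (by omega) (fun i hi1 hi2 => by omega)
  have hr0coin : a 3 + a 2 - a 4 = 1 ∨ a 3 + a 2 - a 4 = a 1 := by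
    obtain ⟨j, hjk, hja⟩ := coin_of_grd_le_one h0 (k := 4) (c := a 3 + a 2 - a 4)
      (by omega) (by omega)
    exact small_coin h0 hmono (by omega) hjk hja (by omega)
  -- Test 2 : amount 2 * a3 in the 4-coin system
  have hT2 : grd a 4 (a 3 + a 3) ≤ 2 := by
    have := orderly_le h4 (c := a 3 + a 3) (by omega)
      (rep_pair (k := 4) ⟨3, by omega⟩ ⟨3, by omega⟩)
    exact this
  have hs2 : grd a 4 (a 3 + a 3) = grd a 4 (a 3 + a 3 - a 4) + 1 :=
    grd_step h0 hmono (by omega) (le_refl 4) (by omega) (fun i hi1 hi2 => by omega)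
  have hr1coin : a 3 + a 3 - a 4 = 1 ∨ a 3 + a 3 - a 4 = a 1 ∨ a 3 + a 3 - a 4 = a 2 := by
    obtain ⟨j, hjk, hja⟩ := coin_of_grd_le_one h0 (k := 4) (c := a 3 + a 3 - a 4)
      (by omega) (by omega)
    exact small_coin3 h0 hmono (by omega) hjk hja (by omega)
  -- case analysis
  rcases hr0coin with hr0 | hr0
  · -- e = d + b - 1
    rcases hr1coin with hr1 | hr1 | hr1
    · omega  -- d = b impossible
    · -- (Ia) : d = b + p - 1, e = 2b + p - 2, w = e
      have hdb : a 3 = a 2 + a 1 - 1 := by omega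
      have heb : a 4 = 2 * a 2 + a 1 - 2 := by omega
      have hwval : w = a 4 := by omega
      -- compute grd a 2 w = p
      have hga : grd a 2 w = grd a 2 (w - a 2) + 1 :=
        grd_step h0 hmono (by omega) (le_refl 2) (by omega) (fun i hi1 hi2 => by omega)
      have hgb : grd a 2 (w - a 2) = grd a 2 (w - a 2 - a 2) + 1 :=
        grd_step h0 hmono (by omega) (le_refl 2) (by omega) (fun i hi1 hi2 => by omega)
      have hgc : grd a 2 (w - a 2 - a 2) = w - a 2 - a 2 :=
        grd_small h0 hmono (by omega) (by omega) (by omega)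
      have hgrdw : grd a 2 w = (a 1 - 2) + 2 := by omega
      -- subcase on p
      rcases Nat.lt_or_ge (a 1) 3 with hp | hp
      · -- p = 2 : conclude
        have hp2' : a 1 = 2 := by omega
        have h1 : a 3 = a 2 + 1 := by omega
        have h2' : a 4 = 2 * a 2 := by omega
        refine ⟨hp2', h1, h2', ?_⟩
        -- n ≥ 2, n ≤ g(b-1) forces b ≥ 4
        have hnge : 2 ≤ n := by omega
        have hnle : n ≤ (w - a 3) / a 1 + (w - a 3) % a 1 := by omega
        rw [hp2'] at hnle
        have hwd3 : w - a 3 = a 2 - 1 := by omega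
        rw [hwd3] at hnle
        omega
      · -- p ≥ 3 : contradiction
        exfalso
        have hblt : 0 < a 2 + a 2 := by omega
        have hbe : a 2 + a 2 < a 4 := by omega
        have hbelow : grd a 3 (a 2 + a 2) ≤ 2 :=
          below_top h0 h4 hblt hbe (rep_pair (k := 3) ⟨2, by omega⟩ ⟨2, by omega⟩)
        have hs3 : grd a 3 (a 2 + a 2) = grd a 3 (a 2 + a 2 - a 3) + 1 :=
          grd_step h0 hmono (by omega) (le_refl 3) (by omega) (fun i hi1 hi2 => by omega)
        have hsml : a 2 + a 2 - a 3 < a 2 := by omega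
        have hg3 : grd a 3 (a 2 + a 2 - a 3) =
            (a 2 + a 2 - a 3) / a 1 + (a 2 + a 2 - a 3) % a 1 :=
          grd_p h0 hmono (by omega) (by omega) hsml
        -- g(b - p + 1) ≤ 1
        have hkey : (a 2 + a 2 - a 3) / a 1 + (a 2 + a 2 - a 3) % a 1 ≤ 1 := by omega
        -- g(b-1) ≤ g(b-p+1) + (p-2) ≤ p - 1
        have hdecomp : w - a 3 = ((a 2 + a 2 - a 3) / a 1) * a 1 +
            ((a 2 + a 2 - a 3) % a 1 + (a 1 - 2)) := by
          have h6 := Nat.div_add_mod (a 2 + a 2 - a 3) (a 1)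
          have h7 : ((a 2 + a 2 - a 3) / a 1) * a 1 = a 1 * ((a 2 + a 2 - a 3) / a 1) :=
            Nat.mul_comm _ _
          omega
        have hsub : (w - a 3) / a 1 + (w - a 3) % a 1 ≤
            (a 2 + a 2 - a 3) / a 1 + ((a 2 + a 2 - a 3) % a 1 + (a 1 - 2)) :=
          gmin hppos _ _ _ hdecomp
        omega
    · -- (Ib) : d = 2b - 1, e = 3b - 2, w = e
      exfalso
      have hd : a 3 = 2 * a 2 - 1 := by omega
      have he : a 4 = 3 * a 2 - 2 := by omega
      have hwval : w = a 4 := by omega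
      have hga : grd a 2 w = grd a 2 (w - a 2) + 1 :=
        grd_step h0 hmono (by omega) (le_refl 2) (by omega) (fun i hi1 hi2 => by omega)
      have hgb : grd a 2 (w - a 2) = grd a 2 (w - a 2 - a 2) + 1 :=
        grd_step h0 hmono (by omega) (le_refl 2) (by omega) (fun i hi1 hi2 => by omega)
      have hsml : w - a 2 - a 2 < a 2 := by omega
      have hgc : grd a 2 (w - a 2 - a 2) =
          (w - a 2 - a 2) / a 1 + (w - a 2 - a 2) % a 1 :=
        grd_p h0 hmono (by omega) (by omega) hsml
      -- w - a2 - a2 = b - 2, w - a3 = b - 1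
      have hdecomp : w - a 3 = ((w - a 2 - a 2) / a 1) * a 1 +
          ((w - a 2 - a 2) % a 1 + 1) := by
        have h6 := Nat.div_add_mod (w - a 2 - a 2) (a 1)
        have h7 : ((w - a 2 - a 2) / a 1) * a 1 = a 1 * ((w - a 2 - a 2) / a 1) :=
          Nat.mul_comm _ _
        omega
      have hsub : (w - a 3) / a 1 + (w - a 3) % a 1 ≤
          (w - a 2 - a 2) / a 1 + ((w - a 2 - a 2) % a 1 + 1) :=
        gmin hppos _ _ _ hdecomp
      omega
  · -- e = d + b - p
    rcases hr1coin with hr1 | hr1 | hr1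
    · omega
    · omega
    · -- (II) : d = 2b - p, e = 3b - 2p
      exfalso
      have hd : a 3 + a 1 = 2 * a 2 := by omega
      have he : a 4 + 2 * a 1 = 3 * a 2 := by omega
      rcases Nat.lt_or_ge w (2 * a 2) with hw2 | hw2
      · -- w < 2b, so b < 2p, and A2-orderliness forces b = 2p - 1
        have hblt : a 2 < 2 * a 1 := by omega
        have hT3 : grd a 2 (a 1 + a 1) ≤ 2 := by
          have := orderly_le h2 (c := a 1 + a 1) (by omega)
            (rep_pair (k := 2) ⟨1, by omega⟩ ⟨1, by omega⟩)
          exact this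
        have hs3 : grd a 2 (a 1 + a 1) = grd a 2 (a 1 + a 1 - a 2) + 1 :=
          grd_step h0 hmono (by omega) (le_refl 2) (by omega) (fun i hi1 hi2 => by omega)
        have hg3 : grd a 2 (a 1 + a 1 - a 2) = a 1 + a 1 - a 2 :=
          grd_small h0 hmono (by omega) (by omega) (by omega)
        have hb2p : a 2 = 2 * a 1 - 1 := by omega
        -- w = 4p - 3
        have hwval : w = 4 * a 1 - 3 := by omega
        have hga : grd a 2 w = grd a 2 (w - a 2) + 1 :=
          grd_step h0 hmono (by omega) (le_refl 2) (by omega) (fun i hi1 hi2 => by omega)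
        have hgc : grd a 2 (w - a 2) = (w - a 2) / a 1 + (w - a 2) % a 1 :=
          grd_p h0 hmono (by omega) (by omega) (by omega)
        have hgev : (w - a 2) / a 1 + (w - a 2) % a 1 = 1 + (a 1 - 2) :=
          geval 1 (a 1 - 2) _ (by omega) (by omega)
        have hgev2 : (w - a 3) / a 1 + (w - a 3) % a 1 = 0 + (a 1 - 1) :=
          geval 0 (a 1 - 1) _ (by omega) (by omega)
        omega
      · -- w ≥ 2b : direct contradiction
        have hga : grd a 2 w = grd a 2 (w - a 2) + 1 :=
          grd_step h0 hmono (by omega) (le_refl 2) (by omega) (fun i hi1 hi2 => by omega)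
        have hgb : grd a 2 (w - a 2) = grd a 2 (w - a 2 - a 2) + 1 :=
          grd_step h0 hmono (by omega) (le_refl 2) (by omega) (fun i hi1 hi2 => by omega)
        have hsml : w - a 2 - a 2 < a 2 := by omega
        have hgc : grd a 2 (w - a 2 - a 2) =
            (w - a 2 - a 2) / a 1 + (w - a 2 - a 2) % a 1 :=
          grd_p h0 hmono (by omega) (by omega) hsml
        have hdecomp : w - a 3 = ((w - a 2 - a 2) / a 1 + 1) * a 1 +
            ((w - a 2 - a 2) % a 1) := by
          have h6 := Nat.div_add_mod (w - a 2 - a 2) (a 1)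
          have h7 : ((w - a 2 - a 2) / a 1 + 1) * a 1 =
              a 1 * ((w - a 2 - a 2) / a 1) + a 1 := by ring
          omega
        have hsub : (w - a 3) / a 1 + (w - a 3) % a 1 ≤
            ((w - a 2 - a 2) / a 1 + 1) + ((w - a 2 - a 2) % a 1) :=
          gmin hppos _ _ _ hdecomp
        omega

end PhaseA

section PhaseB
variable {a : ℕ → ℕ}

lemma grd_step' (h0 : a 0 = 1) (hmono : ∀ i j : ℕ, i < j → j ≤ 6 → a i < a j)
    {k j c : ℕ} (hk : k ≤ 6) (hj : j ≤ k) (hle : a j ≤ c)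
    (hlt : j = k ∨ c < a (j+1)) : grd a k c = grd a k (c - a j) + 1 := by
  apply grd_step h0 hmono hk hj hle
  intro i hi1 hi2
  rcases hlt with h | h
  · omega
  · calc c < a (j+1) := h
    _ ≤ a i := by
      rcases Nat.eq_or_lt_of_le (show j + 1 ≤ i by omega) with h' | h'
      · rw [h']
      · exact le_of_lt (hmono (j+1) i h' (by omega))

lemma coin_lt (hmono : ∀ i j : ℕ, i < j → j ≤ 6 → a i < a j)
    {k j r t : ℕ} (hk : k ≤ 6) (ht : t ≤ k) (hjk : j ≤ k) (hj : a j = r)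
    (hr : r < a t) : ∃ j', j' < t ∧ a j' = r := by
  refine ⟨j, ?_, hj⟩
  by_contra h
  push_neg at h
  have : a t ≤ a j := by
    rcases Nat.eq_or_lt_of_le h with h' | h'
    · rw [h']
    · exact le_of_lt (hmono t j h' (by omega))
  omega

set_option maxHeartbeats 4000000 in
lemma phaseB (h0 : a 0 = 1) (hmono : ∀ i j : ℕ, i < j → j ≤ 6 → a i < a j)
    (ha1 : a 1 = 2) (ha3 : a 3 = a 2 + 1) (ha4 : a 4 = 2 * a 2) (hb4 : 4 ≤ a 2)
    (h4 : Orderly a 4) (h5 : ¬ Orderly a 5) (h6 : Orderly a 6) : False := by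
  have hf : a 4 < a 5 := hmono 4 5 (by omega) (by omega)
  have hg : a 5 < a 6 := hmono 5 6 (by omega) (by omega)
  -- greedy evaluation helpers for the 4-coin prefix (1,2,b,b+1,2b)
  have hE0 : ∀ {k : ℕ}, 2 ≤ k → k ≤ 6 → ∀ {c : ℕ}, c < a 2 → grd a k c = c / 2 + c % 2 := by
    intro k hk2 hk6 c hc
    have := grd_p h0 hmono hk2 hk6 hc
    rwa [ha1] at this
  have hGtop : ∀ c, a 4 ≤ c → grd a 4 c = grd a 4 (c - a 4) + 1 :=
    fun c hc => grd_step' h0 hmono (by omega) (le_refl 4) hc (Or.inl rfl)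
  have hGb : grd a 4 (a 2) = 1 := by
    have := grd_step' h0 hmono (k := 4) (j := 2) (c := a 2) (by omega) (by omega)
      (le_refl _) (Or.inr (by simp only [Nat.reduceAdd]; omega))
    simpa [grd_zero] using this
  have hGb1 : grd a 4 (a 3) = 1 := by
    have := grd_step' h0 hmono (k := 4) (j := 3) (c := a 3) (by omega) (by omega)
      (le_refl _) (Or.inr (by simp only [Nat.reduceAdd]; omega))
    simpa [grd_zero] using this
  have hGmid : ∀ c, a 3 < c → c < a 4 → grd a 4 c = (c - a 3) / 2 + (c - a 3) % 2 + 1 := by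
    intro c hc1 hc2
    have hstep := grd_step' h0 hmono (k := 4) (j := 3) (c := c) (by omega) (by omega)
      (by omega) (Or.inr (by simp only [Nat.reduceAdd]; omega))
    rw [hstep, hE0 (by omega) (by omega) (by omega)]
  -- universal evaluator on [0, a 4)
  have hGlow : ∀ c, c < a 4 → grd a 4 c =
      (if c < a 2 then c / 2 + c % 2 else if c ≤ a 3 then 1 else
        (c - a 3) / 2 + (c - a 3) % 2 + 1) := by
    intro c hc
    rcases Nat.lt_or_ge c (a 2) with h | h
    · rw [if_pos h, hE0 (by omega) (by omega) h]
    rw [if_neg (by omega)]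
    rcases Nat.lt_or_ge (a 3) c with h' | h'
    · rw [if_neg (by omega)]
      exact hGmid c h' hc
    rw [if_pos h']
    rcases Nat.eq_or_lt_of_le h' with h'' | h''
    · rw [h'']; exact hGb1
    · have : c = a 2 := by omega
      rw [this]; exact hGb
  -- the witness from non-orderliness of the 5-prefix
  obtain ⟨w, n, hwg, hwub, hrep4, hn⟩ := exists_witness (kk := 4) h0 hmono (by norm_num) h6 h5
  norm_num at hwg hwub hn
  have hagree : grd a 5 (w - a 5) = grd a 4 (w - a 5) :=
    grd_agree h0 (k := 4) (by simp only [Nat.reduceAdd]; omega)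
  rw [hagree] at hn
  have hGn : grd a 4 w ≤ n := orderly_le h4 (by omega) hrep4
  -- Test 1 : amount a5 + a4 in the 6-coin system
  have hT1 : grd a 6 (a 5 + a 4) ≤ 2 :=
    orderly_le h6 (by omega) (rep_pair (k := 6) ⟨5, by omega⟩ ⟨4, by omega⟩)
  have hs1 : grd a 6 (a 5 + a 4) = grd a 6 (a 5 + a 4 - a 6) + 1 :=
    grd_step' h0 hmono (by omega) (le_refl 6) (by omega) (Or.inl rfl)
  have hr1coin : ∃ j', j' < 4 ∧ a j' = a 5 + a 4 - a 6 := by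
    obtain ⟨j, hjk, hja⟩ := coin_of_grd_le_one h0 (k := 6) (c := a 5 + a 4 - a 6)
      (by omega) (by omega)
    exact coin_lt hmono (by omega) (by omega) hjk hja (by omega)
  -- Test 2 : amount 2 * a5 in the 6-coin system
  have hT2 : grd a 6 (a 5 + a 5) ≤ 2 :=
    orderly_le h6 (by omega) (rep_pair (k := 6) ⟨5, by omega⟩ ⟨5, by omega⟩)
  have ha6lt : a 6 ≤ a 5 + a 5 := by
    obtain ⟨j', hj4, hj⟩ := hr1coin
    have : a j' ≤ a 3 := by
      rcases Nat.lt_or_ge j' 3 with h | h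
      · exact le_of_lt (hmono j' 3 h (by omega))
      · have : j' = 3 := by omega
        rw [this]
    omega
  have hs2 : grd a 6 (a 5 + a 5) = grd a 6 (a 5 + a 5 - a 6) + 1 :=
    grd_step' h0 hmono (by omega) (le_refl 6) (by omega) (Or.inl rfl)
  have hs2pos : 0 < a 5 + a 5 - a 6 := by
    obtain ⟨j', hj4, hj⟩ := hr1coin
    have : a j' ≤ a 3 := by
      rcases Nat.lt_or_ge j' 3 with h | h
      · exact le_of_lt (hmono j' 3 h (by omega))
      · have : j' = 3 := by omega
        rw [this]
    omega
  have hscoin : ∃ j', j' < 5 ∧ a j' = a 5 + a 5 - a 6 := by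
    obtain ⟨j, hjk, hja⟩ := coin_of_grd_le_one h0 (k := 6) (c := a 5 + a 5 - a 6)
      (by omega) (by omega)
    exact coin_lt hmono (by omega) (by omega) hjk hja (by omega)
  -- turn the two coin facts into numeric disjunctions
  have hr1 : a 5 + a 4 - a 6 = 1 ∨ a 5 + a 4 - a 6 = 2 ∨
      a 5 + a 4 - a 6 = a 2 ∨ a 5 + a 4 - a 6 = a 2 + 1 := by
    obtain ⟨j', hj4, hj⟩ := hr1coin
    interval_cases j'
    · left; omega
    · right; left; omega
    · right; right; left; exact hj.symm
    · right; right; right; omega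
  have hs : a 5 + a 5 - a 6 = 1 ∨ a 5 + a 5 - a 6 = 2 ∨ a 5 + a 5 - a 6 = a 2 ∨
      a 5 + a 5 - a 6 = a 2 + 1 ∨ a 5 + a 5 - a 6 = 2 * a 2 := by
    obtain ⟨j', hj4, hj⟩ := hscoin
    interval_cases j'
    · left; omega
    · right; left; omega
    · right; right; left; exact hj.symm
    · right; right; right; left; omega
    · right; right; right; right; omega
  have hchain : grd a 4 w ≤ grd a 4 (w - a 5) := le_trans hGn hn
  rcases hr1 with hR | hR | hR | hR
  · rcases hs with hS | hS | hS | hS | hS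
    · omega
    · -- (f, g) = (2b+1, 4b)
      have hK : grd a 6 (a 2 + a 4) ≤ 2 :=
        orderly_le h6 (by omega) (rep_pair (k := 6) ⟨2, by omega⟩ ⟨4, by omega⟩)
      have e0 : grd a 6 (a 2 + a 4) = grd a 6 (a 2 + a 4 - a 5) + 1 :=
        grd_step' h0 hmono (by omega) (by omega) (by omega)
          (Or.inr (by simp only [Nat.reduceAdd]; omega))
      have e1 : grd a 6 (a 2 + a 4 - a 5) = (a 2 + a 4 - a 5) / 2 + (a 2 + a 4 - a 5) % 2 :=
        hE0 (by omega) (by omega) (by omega)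
      omega
    · -- (3b-1, 5b-2)
      rcases Nat.lt_or_ge w (2 * a 4) with hw2 | hw2
      · have e0 : grd a 4 w = grd a 4 (w - a 4) + 1 := hGtop w (by omega)
        have e1 := hGlow (w - a 4) (by omega)
        have ev := hGlow (w - a 5) (by omega)
        split_ifs at e1 ev <;> omega
      · have e0 : grd a 4 w = grd a 4 (w - a 4) + 1 := hGtop w (by omega)
        have e0' : grd a 4 (w - a 4) = grd a 4 (w - a 4 - a 4) + 1 := hGtop _ (by omega)
        have e1 := hGlow (w - a 4 - a 4) (by omega)
        have ev := hGlow (w - a 5) (by omega)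
        split_ifs at e1 ev <;> omega
    · -- (3b, 5b-1)
      rcases Nat.lt_or_ge w (2 * a 4) with hw2 | hw2
      · have e0 : grd a 4 w = grd a 4 (w - a 4) + 1 := hGtop w (by omega)
        have e1 := hGlow (w - a 4) (by omega)
        have ev := hGlow (w - a 5) (by omega)
        split_ifs at e1 ev <;> omega
      · have e0 : grd a 4 w = grd a 4 (w - a 4) + 1 := hGtop w (by omega)
        have e0' : grd a 4 (w - a 4) = grd a 4 (w - a 4 - a 4) + 1 := hGtop _ (by omega)
        have e1 := hGlow (w - a 4 - a 4) (by omega)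
        have ev := hGlow (w - a 5) (by omega)
        split_ifs at e1 ev <;> omega
    · -- (4b-1, 6b-2)
      rcases Nat.lt_or_ge w (2 * a 4) with hw2 | hw2
      · have e0 : grd a 4 w = grd a 4 (w - a 4) + 1 := hGtop w (by omega)
        have e1 := hGlow (w - a 4) (by omega)
        have ev := hGlow (w - a 5) (by omega)
        split_ifs at e1 ev <;> omega
      · have e0 : grd a 4 w = grd a 4 (w - a 4) + 1 := hGtop w (by omega)
        have e0' : grd a 4 (w - a 4) = grd a 4 (w - a 4 - a 4) + 1 := hGtop _ (by omega)
        have e1 := hGlow (w - a 4 - a 4) (by omega)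
        have ev := hGlow (w - a 5) (by omega)
        split_ifs at e1 ev <;> omega
  · rcases hs with hS | hS | hS | hS | hS
    · omega
    · omega
    · -- (3b-2, 5b-4)
      have hK : grd a 6 (a 3 + a 4) ≤ 2 :=
        orderly_le h6 (by omega) (rep_pair (k := 6) ⟨3, by omega⟩ ⟨4, by omega⟩)
      have e0 : grd a 6 (a 3 + a 4) = grd a 6 (a 3 + a 4 - a 5) + 1 :=
        grd_step' h0 hmono (by omega) (by omega) (by omega)
          (Or.inr (by simp only [Nat.reduceAdd]; omega))
      have e1 : grd a 6 (a 3 + a 4 - a 5) = (a 3 + a 4 - a 5) / 2 + (a 3 + a 4 - a 5) % 2 :=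
        hE0 (by omega) (by omega) (by omega)
      omega
    · -- (3b-1, 5b-3)
      rcases Nat.lt_or_ge w (2 * a 4) with hw2 | hw2
      · have e0 : grd a 4 w = grd a 4 (w - a 4) + 1 := hGtop w (by omega)
        have e1 := hGlow (w - a 4) (by omega)
        have ev := hGlow (w - a 5) (by omega)
        split_ifs at e1 ev <;> omega
      · have e0 : grd a 4 w = grd a 4 (w - a 4) + 1 := hGtop w (by omega)
        have e0' : grd a 4 (w - a 4) = grd a 4 (w - a 4 - a 4) + 1 := hGtop _ (by omega)
        have e1 := hGlow (w - a 4 - a 4) (by omega)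
        have ev := hGlow (w - a 5) (by omega)
        split_ifs at e1 ev <;> omega
    · -- (4b-2, 6b-4)
      rcases Nat.lt_or_ge w (2 * a 4) with hw2 | hw2
      · have e0 : grd a 4 w = grd a 4 (w - a 4) + 1 := hGtop w (by omega)
        have e1 := hGlow (w - a 4) (by omega)
        have ev := hGlow (w - a 5) (by omega)
        split_ifs at e1 ev <;> omega
      · have e0 : grd a 4 w = grd a 4 (w - a 4) + 1 := hGtop w (by omega)
        have e0' : grd a 4 (w - a 4) = grd a 4 (w - a 4 - a 4) + 1 := hGtop _ (by omega)
        have e1 := hGlow (w - a 4 - a 4) (by omega)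
        have ev := hGlow (w - a 5) (by omega)
        split_ifs at e1 ev <;> omega
  · rcases hs with hS | hS | hS | hS | hS
    · omega
    · omega
    · omega
    · -- (2b+1, 3b+1)
      have hK : grd a 6 (a 2 + a 4) ≤ 2 :=
        orderly_le h6 (by omega) (rep_pair (k := 6) ⟨2, by omega⟩ ⟨4, by omega⟩)
      have e0 : grd a 6 (a 2 + a 4) = grd a 6 (a 2 + a 4 - a 5) + 1 :=
        grd_step' h0 hmono (by omega) (by omega) (by omega)
          (Or.inr (by simp only [Nat.reduceAdd]; omega))
      have e1 : grd a 6 (a 2 + a 4 - a 5) = (a 2 + a 4 - a 5) / 2 + (a 2 + a 4 - a 5) % 2 :=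
        hE0 (by omega) (by omega) (by omega)
      omega
    · -- (3b, 4b)
      rcases Nat.lt_or_ge w (2 * a 4) with hw2 | hw2
      · have e0 : grd a 4 w = grd a 4 (w - a 4) + 1 := hGtop w (by omega)
        have e1 := hGlow (w - a 4) (by omega)
        have ev := hGlow (w - a 5) (by omega)
        split_ifs at e1 ev <;> omega
      · have e0 : grd a 4 w = grd a 4 (w - a 4) + 1 := hGtop w (by omega)
        have e0' : grd a 4 (w - a 4) = grd a 4 (w - a 4 - a 4) + 1 := hGtop _ (by omega)
        have e1 := hGlow (w - a 4 - a 4) (by omega)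
        have ev := hGlow (w - a 5) (by omega)
        split_ifs at e1 ev <;> omega
  · rcases hs with hS | hS | hS | hS | hS
    · omega
    · omega
    · omega
    · omega
    · -- (3b-1, 4b-2)
      rcases Nat.lt_or_ge w (2 * a 4) with hw2 | hw2
      · have e0 : grd a 4 w = grd a 4 (w - a 4) + 1 := hGtop w (by omega)
        have e1 := hGlow (w - a 4) (by omega)
        have ev := hGlow (w - a 5) (by omega)
        split_ifs at e1 ev <;> omega
      · have e0 : grd a 4 w = grd a 4 (w - a 4) + 1 := hGtop w (by omega)
        have e0' : grd a 4 (w - a 4) = grd a 4 (w - a 4 - a 4) + 1 := hGtop _ (by omega)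
        have e1 := hGlow (w - a 4 - a 4) (by omega)
        have ev := hGlow (w - a 5) (by omega)
        split_ifs at e1 ev <;> omega

end PhaseB

/-- There is no currency `(1, a 1, …, a 6)` whose pattern of orderliness of
prefixes is `+++-+-+`. -/
theorem empty_pattern_class :
    ¬ ∃ a : ℕ → ℕ, IsCurrency a 6 ∧
      Orderly a 0 ∧ Orderly a 1 ∧ Orderly a 2 ∧ ¬ Orderly a 3 ∧
      Orderly a 4 ∧ ¬ Orderly a 5 ∧ Orderly a 6 := by
  rintro ⟨a, ⟨h0, hmono⟩, -, -, h2, h3, h4, h5, h6⟩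
  obtain ⟨ha1, ha3, ha4, hb4⟩ := phaseA h0 hmono h2 h3 h4
  exact phaseB h0 hmono ha1 ha3 ha4 hb4 h4 h5 h6
end

section
/- For integers m > l ≥ 2 and p ≥ 2, the currency A_{l,m}(p) = (a_0, a_1, …, a_m) defined by a_i = i + 1 for 0 ≤ i ≤ l − 1 (so the first l coins are 1, 2, …, l) and a_{l+i} = ((i+1)·p − i)·l for 0 ≤ i ≤ m − l is totally orderly. Moreover, if p > m − l, then ⌈a_m / a_l⌉ = m − l + 1. -/
def hh (p R : ℕ) : ℕ := if R < p then R else (R - p) % (p - 1) + 1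

def FF (p B Q : ℕ) : ℕ := Q / B + hh p (Q % B)

def Gg (F0 : ℕ → ℕ) (n c : ℕ) : ℕ := F0 (c / n) + (if c % n = 0 then 0 else 1)

lemma dm {B q R c : ℕ} (hc : c = q * B + R) (hR : R < B) : c / B = q ∧ c % B = R := by
  subst hc
  have hB : 0 < B := by omega
  rw [Nat.mul_comm, Nat.mul_add_div hB, Nat.mul_add_mod, Nat.div_eq_of_lt hR,
    Nat.mod_eq_of_lt hR]
  omega

lemma mod_succ_le (x d : ℕ) : (x + 1) % d ≤ x % d + 1 := by
  calc (x + 1) % d = (x % d + 1 % d) % d := by rw [Nat.add_mod]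
    _ ≤ x % d + 1 % d := Nat.mod_le _ _
    _ ≤ x % d + 1 := by have := Nat.mod_le 1 d; omega

lemma hh_succ_le {p : ℕ} (hp : 2 ≤ p) (R : ℕ) : hh p (R + 1) ≤ hh p R + 1 := by
  unfold hh
  by_cases h1 : R + 1 < p
  · rw [if_pos h1, if_pos (by omega : R < p)]
  · by_cases h2 : R < p
    · rw [if_neg h1, if_pos h2]
      have h3 : R + 1 - p = 0 := by omega
      rw [h3, Nat.zero_mod]
      omega
    · rw [if_neg h1, if_neg h2]
      have : R + 1 - p = (R - p) + 1 := by omega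
      rw [this]
      have := mod_succ_le (R - p) (p - 1)
      omega

lemma hh_zero {p : ℕ} (hp : 2 ≤ p) : hh p 0 = 0 := by
  unfold hh
  rw [if_pos (by omega)]

lemma K1 {p B : ℕ} (hp : 2 ≤ p) (hB : 1 ≤ B) (Q : ℕ) :
    FF p B (Q + 1) ≤ FF p B Q + 1 := by
  set q := Q / B with hq
  set R := Q % B with hR
  have hQ : Q = q * B + R := by
    rw [hq, hR, Nat.mul_comm]; exact (Nat.div_add_mod Q B).symm
  have hRB : R < B := Nat.mod_lt _ (by omega)
  by_cases hc : R + 1 < B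
  · obtain ⟨h1, h2⟩ := dm (show Q + 1 = q * B + (R + 1) by omega) hc
    unfold FF
    rw [h1, h2, ← hq, ← hR]
    have := hh_succ_le hp R
    omega
  · obtain ⟨h1, h2⟩ := dm (show Q + 1 = (q + 1) * B + 0 by rw [Nat.add_mul]; omega)
      (by omega)
    unfold FF
    rw [h1, h2, ← hq, ← hR, hh_zero hp]
    omega

lemma K2 {p s t : ℕ} (hp : 2 ≤ p) (hts : t ≤ s) (Q : ℕ) :
    FF p (p + s * (p - 1)) (Q + (p + t * (p - 1))) ≤ FF p (p + s * (p - 1)) Q + 1 := by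
  set d := p - 1 with hd
  have hd1 : 1 ≤ d := by omega
  set B := p + s * d with hBdef
  set β := p + t * d with hβdef
  have hβB : β ≤ B := by
    have : t * d ≤ s * d := Nat.mul_le_mul_right d hts
    omega
  have hB : 1 ≤ B := by omega
  set q := Q / B with hq
  set R := Q % B with hR
  have hQ : Q = q * B + R := by
    rw [hq, hR, Nat.mul_comm]; exact (Nat.div_add_mod Q B).symm
  have hRB : R < B := Nat.mod_lt _ (by omega)
  have hβp : p ≤ β := by omega
  by_cases hc : R + β < B
  · obtain ⟨h1, h2⟩ := dm (show Q + β = q * B + (R + β) by omega) hc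
    unfold FF
    rw [h1, h2, ← hq, ← hR]
    have key : hh p (R + β) = R % d + 1 := by
      unfold hh
      rw [if_neg (by omega)]
      have : R + β - p = R + t * d := by omega
      rw [this, ← hd, Nat.add_mul_mod_self_right]
    rw [key]
    have key2 : R % d ≤ hh p R := by
      unfold hh
      by_cases h2 : R < p
      · rw [if_pos h2]; exact Nat.mod_le _ _
      · rw [if_neg h2, ← hd]
        have hRe : R = ((R - p) + 1) + d := by omega
        calc R % d = ((R - p) + 1) % d := by conv_lhs => rw [hRe, Nat.add_mod_right]
          _ ≤ (R - p) % d + 1 := mod_succ_le _ _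
    omega
  · -- carry case
    set R' := R + β - B with hR'
    have hRD : B - β = (s - t) * d := by
      rw [hBdef, hβdef, Nat.sub_mul]
      omega
    have hR'B : R' < B := by omega
    obtain ⟨h1, h2⟩ := dm (show Q + β = (q + 1) * B + R' by rw [Nat.add_mul]; omega) hR'B
    unfold FF
    rw [h1, h2, ← hq, ← hR]
    have hhle : hh p R' ≤ hh p R := by
      have hRR' : R = R' + (s - t) * d := by omega
      by_cases hp' : p ≤ R'
      · unfold hh
        rw [if_neg (by omega), if_neg (by omega), ← hd]
        have : R - p = (R' - p) + (s - t) * d := by omega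
        rw [this, Nat.add_mul_mod_self_right]
      · by_cases hp2 : R < p
        · unfold hh
          rw [if_pos (by omega), if_pos hp2]
          omega
        · -- R' < p ≤ R
          have hst1 : 1 ≤ s - t := by
            rcases Nat.eq_zero_or_pos (s - t) with h | h
            · rw [h] at hRR'; simp at hRR'; omega
            · omega
          obtain ⟨w, hw⟩ : ∃ w, s - t = w + 1 := ⟨s - t - 1, by omega⟩
          have hDsplit : (s - t) * d = w * d + d := by rw [hw]; ring
          rcases Nat.eq_zero_or_pos R' with hR'0 | hR'1
          · unfold hh
            rw [if_pos (by omega), if_neg hp2, hR'0]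
            omega
          · have hkey : R - p = (R' - 1) + w * d := by omega
            unfold hh
            rw [if_pos (by omega), if_neg hp2, ← hd, hkey, Nat.add_mul_mod_self_right,
              Nat.mod_eq_of_lt (by omega)]
            omega
    omega

lemma Gg_small_step {F0 : ℕ → ℕ} {n v : ℕ} (hn : 0 < n)
    (hF : ∀ Q, F0 (Q + 1) ≤ F0 Q + 1) (hv1 : 1 ≤ v) (hvn : v ≤ n) (u : ℕ) :
    Gg F0 n (u + v) ≤ Gg F0 n u + 1 := by
  set Q := u / n with hQ
  set r := u % n with hr
  have hu : u = Q * n + r := by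
    rw [hQ, hr, Nat.mul_comm]; exact (Nat.div_add_mod u n).symm
  have hrn : r < n := Nat.mod_lt _ hn
  by_cases hc : r + v < n
  · obtain ⟨h1, h2⟩ := dm (show u + v = Q * n + (r + v) by omega) hc
    unfold Gg
    rw [h1, h2, ← hQ, ← hr]
    by_cases h : r + v = 0
    · rw [if_pos h]
      split <;> omega
    · rw [if_neg h]
      split <;> omega
  · set r' := r + v - n with hr'
    have hr'n : r' < n := by omega
    obtain ⟨h1, h2⟩ := dm (show u + v = (Q + 1) * n + r' by rw [Nat.add_mul]; omega) hr'n
    unfold Gg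
    rw [h1, h2, ← hQ, ← hr]
    have hF' := hF Q
    by_cases h'' : r' = 0
    · rw [if_pos h'']
      split <;> omega
    · rw [if_neg h'']
      rw [if_neg (by omega : ¬ r = 0)]
      omega

lemma Gg_big_step {F0 : ℕ → ℕ} {n β : ℕ} (hn : 0 < n)
    (hF : ∀ Q, F0 (Q + β) ≤ F0 Q + 1) (u : ℕ) :
    Gg F0 n (u + β * n) ≤ Gg F0 n u + 1 := by
  unfold Gg
  rw [Nat.add_mul_div_right _ _ hn, Nat.add_mul_mod_self_right]
  have := hF (u / n)
  omega

lemma dm_sub {n c : ℕ} (hn : 0 < n) (hc : n ≤ c) :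
    (c - n) / n = c / n - 1 ∧ (c - n) % n = c % n := by
  have h0 : c = c / n * n + c % n := by
    rw [Nat.mul_comm]; exact (Nat.div_add_mod c n).symm
  have h1 : 1 ≤ c / n := (Nat.one_le_div_iff hn).mpr hc
  have h2 : (c / n - 1) * n = c / n * n - n := by rw [Nat.sub_mul, Nat.one_mul]
  have h3 : c % n < n := Nat.mod_lt _ hn
  have h4 : n ≤ c / n * n := by
    calc n = 1 * n := (Nat.one_mul n).symm
      _ ≤ c / n * n := Nat.mul_le_mul_right n h1
  exact dm (by omega) h3


lemma grd_step_s17 {a : ℕ → ℕ} {k c b : ℕ} (hb : bestCoin a k c = b) (hb1 : 1 ≤ b)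
    (hc : 1 ≤ c) : grd a k c = grd a k (c - b) + 1 := by
  obtain ⟨c', rfl⟩ : ∃ c', c = c' + 1 := ⟨c - 1, by omega⟩
  rw [grd, hb]
  simp [hb1]

lemma bestCoin_spec {a : ℕ → ℕ} {k c j0 : ℕ} (hj : j0 ≤ k) (h2 : a j0 ≤ c)
    (h3 : ∀ i, i ≤ k → a i ≤ c → a i ≤ a j0) : bestCoin a k c = a j0 := by
  apply le_antisymm
  · refine Finset.sup_le fun i hi => ?_
    simp only [Finset.mem_filter, Finset.mem_range] at hi
    exact h3 i (by omega) hi.2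
  · refine Finset.le_sup ?_
    simp only [Finset.mem_filter, Finset.mem_range]
    exact ⟨by omega, h2⟩


lemma sum_update_split {k : ℕ} (x : Fin (k + 1) → ℕ) (j : Fin (k + 1)) (v : ℕ)
    (g : Fin (k + 1) → ℕ) :
    ∑ i, Function.update x j v i * g i = v * g j + ∑ i ∈ Finset.univ.erase j, x i * g i := by
  rw [← Finset.add_sum_erase _ (fun i => Function.update x j v i * g i) (Finset.mem_univ j)]
  rw [Function.update_self]
  congr 1
  refine Finset.sum_congr rfl fun i hi => ?_
  rw [Function.update_of_ne (Finset.ne_of_mem_erase hi)]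

lemma sum_update_split' {k : ℕ} (x : Fin (k + 1) → ℕ) (j : Fin (k + 1)) (v : ℕ) :
    ∑ i, Function.update x j v i = v + ∑ i ∈ Finset.univ.erase j, x i := by
  have := sum_update_split x j v (fun _ => 1)
  simpa using this

lemma sum_split {k : ℕ} (x : Fin (k + 1) → ℕ) (j : Fin (k + 1)) (g : Fin (k + 1) → ℕ) :
    ∑ i, x i * g i = x j * g j + ∑ i ∈ Finset.univ.erase j, x i * g i :=
  (Finset.add_sum_erase _ (fun i => x i * g i) (Finset.mem_univ j)).symm

lemma sum_split' {k : ℕ} (x : Fin (k + 1) → ℕ) (j : Fin (k + 1)) :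
    ∑ i, x i = x j + ∑ i ∈ Finset.univ.erase j, x i :=
  (Finset.add_sum_erase _ x (Finset.mem_univ j)).symm

lemma exists_rep_grd {a : ℕ → ℕ} {k : ℕ} (h1 : a 0 = 1) :
    ∀ c, ∃ x : Fin (k + 1) → ℕ, (∑ i, x i) = grd a k c ∧ (∑ i, x i * a i.1) = c := by
  intro c
  induction c using Nat.strong_induction_on with
  | _ c ih =>
    rcases Nat.eq_zero_or_pos c with rfl | hc
    · exact ⟨0, by simp [grd], by simp⟩
    · -- bestCoin is attained
      have hne : ((Finset.range (k + 1)).filter fun j => a j ≤ c).Nonempty := by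
        refine ⟨0, ?_⟩
        simp only [Finset.mem_filter, Finset.mem_range]
        exact ⟨by omega, by omega⟩
      obtain ⟨j0, hj0mem, hj0⟩ := Finset.exists_mem_eq_sup _ hne a
      simp only [Finset.mem_filter, Finset.mem_range] at hj0mem
      have hbc : bestCoin a k c = a j0 := hj0
      have hble : a j0 ≤ c := hj0mem.2
      have hb1 : 1 ≤ a j0 := by
        have : a 0 ≤ bestCoin a k c := by
          refine Finset.le_sup ?_
          simp only [Finset.mem_filter, Finset.mem_range]
          exact ⟨by omega, by omega⟩
        omega
      have hg : grd a k c = grd a k (c - a j0) + 1 := grd_step_s17 hbc hb1 hc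
      obtain ⟨x, hx1, hx2⟩ := ih (c - a j0) (by omega)
      set j0' : Fin (k + 1) := ⟨j0, by omega⟩
      refine ⟨Function.update x j0' (x j0' + 1), ?_, ?_⟩
      · rw [sum_update_split', hg, ← hx1, sum_split' x j0']
        ring
      · rw [sum_update_split x j0' (x j0' + 1) (fun i => a i.1)]
        rw [sum_split x j0' (fun i => a i.1)] at hx2
        have hcoe : ((j0' : Fin (k + 1)) : ℕ) = j0 := rfl
        simp only [hcoe] at hx2 ⊢
        have : (x j0' + 1) * a j0 = x j0' * a j0 + a j0 := by ring
        omega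

lemma opt_le_grd {a : ℕ → ℕ} {k : ℕ} (h1 : a 0 = 1) (c : ℕ) :
    opt a k c ≤ grd a k c := by
  obtain ⟨x, hx1, hx2⟩ := exists_rep_grd (k := k) h1 c
  exact Nat.sInf_le ⟨x, hx1, hx2⟩

lemma grd_le_sum {a : ℕ → ℕ} {k : ℕ}
    (H : ∀ u i, i ≤ k → grd a k (u + a i) ≤ grd a k u + 1) :
    ∀ n (x : Fin (k + 1) → ℕ), (∑ i, x i) = n → grd a k (∑ i, x i * a i.1) ≤ n := by
  intro n
  induction n with
  | zero =>
    intro x hx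
    have : ∀ i ∈ Finset.univ, x i = 0 := by
      intro i _
      by_contra h
      have := Finset.single_le_sum (f := x) (fun i _ => Nat.zero_le _) (Finset.mem_univ i)
      omega
    have hz : (∑ i, x i * a i.1) = 0 := Finset.sum_eq_zero fun i hi => by
      rw [this i hi]; ring
    rw [hz]; simp [grd]
  | succ n ih =>
    intro x hx
    have hex : ∃ i0 : Fin (k + 1), 0 < x i0 := by
      by_contra h
      push_neg at h
      have : (∑ i, x i) = 0 := Finset.sum_eq_zero fun i _ => by have := h i; omega
      omega
    obtain ⟨i0, hi0⟩ := hex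
    set x' := Function.update x i0 (x i0 - 1) with hx'
    have hs1 : (∑ i, x' i) = n := by
      rw [hx', sum_update_split']
      rw [sum_split' x i0] at hx
      omega
    have hs2 : (∑ i, x i * a i.1) = (∑ i, x' i * a i.1) + a i0.1 := by
      rw [hx', sum_update_split x i0 (x i0 - 1) (fun i => a i.1)]
      rw [sum_split x i0 (fun i => a i.1)]
      have : x i0 * a (i0 : ℕ) = (x i0 - 1) * a (i0 : ℕ) + a (i0 : ℕ) := by
        conv_lhs => rw [← Nat.sub_add_cancel hi0]
        ring
      omega
    rw [hs2]
    calc grd a k ((∑ i, x' i * a i.1) + a i0.1) ≤ grd a k (∑ i, x' i * a i.1) + 1 :=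
          H _ i0.1 (by omega)
      _ ≤ n + 1 := by have := ih x' hs1; omega

lemma orderly_of_step {a : ℕ → ℕ} {k : ℕ} (h1 : a 0 = 1)
    (H : ∀ u i, i ≤ k → grd a k (u + a i) ≤ grd a k u + 1) : Orderly a k := by
  intro c _
  refine le_antisymm (opt_le_grd h1 c) ?_
  obtain ⟨x0, hx01, hx02⟩ := exists_rep_grd (k := k) h1 c
  refine le_csInf ⟨_, x0, hx01, hx02⟩ ?_
  rintro n ⟨x, hx1, hx2⟩
  have := grd_le_sum H n x hx1
  rw [hx2] at this
  exact this

def coinA (l p : ℕ) : ℕ → ℕ :=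
  fun i => if i ≤ l - 1 then i + 1 else ((i - l + 1) * p - (i - l)) * l

lemma coinA_small {l p i : ℕ} (hi : i ≤ l - 1) : coinA l p i = i + 1 := by
  unfold coinA; rw [if_pos hi]

lemma coinA_big {l p i : ℕ} (hl : 2 ≤ l) (hp : 1 ≤ p) (hi : l ≤ i) :
    coinA l p i = (p + (i - l) * (p - 1)) * l := by
  unfold coinA
  rw [if_neg (by omega)]
  congr 1
  set t := i - l with ht
  have h1 : (t + 1) * p = t * p + p := by ring
  have h2 : t * (p - 1) = t * p - t := by
    rw [Nat.mul_comm, Nat.sub_mul, Nat.one_mul, Nat.mul_comm]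
  have h3 : t ≤ t * p := Nat.le_mul_of_pos_right t (by omega)
  omega

/-- Greedy formula for the prefix currencies with only small coins. -/
lemma grd_eq_A {l p j : ℕ} (hl : 2 ≤ l) (hj : j ≤ l - 1) (c : ℕ) :
    grd (coinA l p) j c = Gg id (j + 1) c := by
  induction c using Nat.strong_induction_on with
  | _ c ih =>
    rcases Nat.eq_zero_or_pos c with rfl | hc
    · simp [grd, Gg]
    by_cases hcase : c < j + 1
    · have hbest : bestCoin (coinA l p) j c = c := by
        have hv : coinA l p (c - 1) = c := by
          rw [coinA_small (by omega)]; omega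
        have := bestCoin_spec (a := coinA l p) (k := j) (c := c) (j0 := c - 1)
          (by omega) (by omega) (fun i hi hic => by omega)
        omega
      rw [grd_step_s17 hbest (by omega) hc]
      have h0 : c - c = 0 := by omega
      rw [h0]
      unfold Gg
      rw [Nat.div_eq_of_lt hcase, Nat.mod_eq_of_lt hcase, if_neg (by omega)]
      simp [grd]
    · push_neg at hcase
      have hbest : bestCoin (coinA l p) j c = j + 1 := by
        have hv : coinA l p j = j + 1 := coinA_small hj
        have := bestCoin_spec (a := coinA l p) (k := j) (c := c) (j0 := j)
          le_rfl (by omega) (fun i hi hic => by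
            rw [coinA_small (by omega), hv]; omega)
        omega
      rw [grd_step_s17 hbest (by omega) hc]
      obtain ⟨hdiv, hmod⟩ := dm_sub (show 0 < j + 1 by omega) hcase
      rw [ih (c - (j + 1)) (by omega)]
      unfold Gg
      rw [hdiv, hmod]
      simp only [id_eq]
      have h1 : 1 ≤ c / (j + 1) := (Nat.one_le_div_iff (by omega)).mpr hcase
      omega

/-- Greedy formula for the prefix currencies containing big coins. -/
lemma grd_eq_B {l p j : ℕ} (hl : 2 ≤ l) (hp : 2 ≤ p) (hj : l ≤ j) (c : ℕ) :
    grd (coinA l p) j c = Gg (FF p (p + (j - l) * (p - 1))) l c := by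
  have hl0 : 0 < l := by omega
  have hsd : 0 ≤ (j - l) * (p - 1) := Nat.zero_le _
  induction c using Nat.strong_induction_on with
  | _ c ih =>
    rcases Nat.eq_zero_or_pos c with rfl | hc
    · simp [grd, Gg, FF, hh_zero hp]
    have hceq : c = c / l * l + c % l := by
      rw [Nat.mul_comm]; exact (Nat.div_add_mod c l).symm
    have hrl : c % l < l := Nat.mod_lt _ hl0
    by_cases hcase1 : c < l
    · -- tiny amounts: pay with the single coin c
      have hQ0 : c / l = 0 := Nat.div_eq_of_lt hcase1
      have hbest : bestCoin (coinA l p) j c = c := by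
        have hv : coinA l p (c - 1) = c := by
          rw [coinA_small (by omega)]; omega
        have := bestCoin_spec (a := coinA l p) (k := j) (c := c) (j0 := c - 1)
          (by omega) (by omega) (fun i hi hic => by omega)
        omega
      rw [grd_step_s17 hbest (by omega) hc]
      have h0 : c - c = 0 := by omega
      rw [h0]
      have h00 : c / l * l = 0 := by rw [hQ0, Nat.zero_mul]
      have hrne : ¬ c % l = 0 := by omega
      unfold Gg FF
      rw [hQ0]
      simp [grd, hh_zero hp, hrne]
    push_neg at hcase1
    by_cases hcase2 : c < p * l
    · -- take the coin l
      have hQ1 : 1 ≤ c / l := (Nat.one_le_div_iff hl0).mpr hcase1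
      have hQp : c / l < p := Nat.div_lt_iff_lt_mul hl0 |>.mpr hcase2
      have hbest : bestCoin (coinA l p) j c = l := by
        have hv : coinA l p (l - 1) = l := by rw [coinA_small le_rfl]; omega
        have := bestCoin_spec (a := coinA l p) (k := j) (c := c) (j0 := l - 1)
          (by omega) (by omega) (fun i hi hic => by
            by_cases hil : i ≤ l - 1
            · rw [coinA_small hil, hv]; omega
            · exfalso
              rw [coinA_big hl (by omega) (by omega)] at hic
              have h5 : p * l ≤ (p + (i - l) * (p - 1)) * l :=
                Nat.mul_le_mul_right l (by omega)
              omega)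
        omega
      rw [grd_step_s17 hbest (by omega) hc]
      obtain ⟨hdiv, hmod⟩ := dm_sub hl0 hcase1
      rw [ih (c - l) (by omega)]
      unfold Gg FF
      rw [hdiv, hmod]
      have e1 : c / l / (p + (j - l) * (p - 1)) = 0 := Nat.div_eq_of_lt (by omega)
      have e2 : c / l % (p + (j - l) * (p - 1)) = c / l := Nat.mod_eq_of_lt (by omega)
      have e3 : (c / l - 1) / (p + (j - l) * (p - 1)) = 0 := Nat.div_eq_of_lt (by omega)
      have e4 : (c / l - 1) % (p + (j - l) * (p - 1)) = c / l - 1 :=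
        Nat.mod_eq_of_lt (by omega)
      rw [e1, e2, e3, e4]
      unfold hh
      rw [if_pos hQp, if_pos (by omega : c / l - 1 < p)]
      omega
    push_neg at hcase2
    by_cases hcase3 : c < (p + (j - l) * (p - 1)) * l
    · -- take a middle big coin
      have hQp : p ≤ c / l := (Nat.le_div_iff_mul_le hl0).mpr hcase2
      have hQB : c / l < p + (j - l) * (p - 1) :=
        Nat.div_lt_iff_lt_mul hl0 |>.mpr hcase3
      set t := (c / l - p) / (p - 1) with htdef
      have hmod' : t * (p - 1) + (c / l - p) % (p - 1) = c / l - p := by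
        rw [htdef, Nat.mul_comm]; exact Nat.div_add_mod _ _
      have hmlt : (c / l - p) % (p - 1) < p - 1 := Nat.mod_lt _ (by omega)
      have hts : t < j - l := by
        rw [htdef]
        exact Nat.div_lt_iff_lt_mul (by omega) |>.mpr (by omega)
      set β := p + t * (p - 1) with hβ
      have hβQ : β ≤ c / l := by omega
      have hvβ : coinA l p (l + t) = β * l := by
        rw [coinA_big (i := l + t) hl (by omega) (Nat.le_add_right l t)]
        rw [Nat.add_sub_cancel_left]
      have hbest : bestCoin (coinA l p) j c = β * l := by
        have h2a : β * l ≤ c / l * l := Nat.mul_le_mul_right l hβQ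
        have h2b : c / l * l ≤ c := Nat.div_mul_le_self c l
        have h3 : ∀ i, i ≤ j → coinA l p i ≤ c → coinA l p i ≤ coinA l p (l + t) := by
          intro i hi hic
          rw [hvβ]
          by_cases hil : i ≤ l - 1
          · rw [coinA_small hil]
            have : 1 * l ≤ β * l := Nat.mul_le_mul_right l (by omega)
            omega
          · rw [coinA_big hl (by omega) (by omega)] at hic ⊢
            by_cases htt : i - l ≤ t
            · exact Nat.mul_le_mul_right l (by
                have : (i - l) * (p - 1) ≤ t * (p - 1) :=
                  Nat.mul_le_mul_right (p - 1) htt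
                omega)
            · exfalso
              have h6 : (t + 1) * (p - 1) = t * (p - 1) + (p - 1) := by ring
              have h7 : c / l + 1 ≤ p + (t + 1) * (p - 1) := by omega
              have h8 : (c / l + 1) * l ≤ (p + (t + 1) * (p - 1)) * l :=
                Nat.mul_le_mul_right l h7
              have h9 : (p + (t + 1) * (p - 1)) * l ≤ (p + (i - l) * (p - 1)) * l :=
                Nat.mul_le_mul_right l (by
                  have : (t + 1) * (p - 1) ≤ (i - l) * (p - 1) :=
                    Nat.mul_le_mul_right (p - 1) (by omega)
                  omega)
              have h10 : (c / l + 1) * l = c / l * l + l := by ring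
              omega
        have := bestCoin_spec (a := coinA l p) (k := j) (c := c) (j0 := l + t)
          (by omega) (by omega) h3
        omega
      have hβl1 : 1 ≤ β * l := Nat.mul_pos (by omega) hl0
      rw [grd_step_s17 hbest (by omega) hc]
      have hsubmul : (c / l - β) * l = c / l * l - β * l := Nat.sub_mul _ β l
      have hβQl : β * l ≤ c / l * l := Nat.mul_le_mul_right l hβQ
      obtain ⟨hdiv, hmod⟩ := dm (show c - β * l = (c / l - β) * l + c % l by omega) hrl
      rw [ih (c - β * l) (by omega)]
      unfold Gg FF
      rw [hdiv, hmod]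
      have hQβ : c / l - β = (c / l - p) % (p - 1) := by omega
      have e1 : c / l / (p + (j - l) * (p - 1)) = 0 := Nat.div_eq_of_lt hQB
      have e2 : c / l % (p + (j - l) * (p - 1)) = c / l := Nat.mod_eq_of_lt hQB
      have e3 : (c / l - β) / (p + (j - l) * (p - 1)) = 0 := Nat.div_eq_of_lt (by omega)
      have e4 : (c / l - β) % (p + (j - l) * (p - 1)) = c / l - β :=
        Nat.mod_eq_of_lt (by omega)
      rw [e1, e2, e3, e4]
      unfold hh
      rw [if_neg (by omega : ¬ c / l < p), if_pos (by omega : c / l - β < p)]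
      omega
    · -- take the largest coin
      push_neg at hcase3
      have hQB : p + (j - l) * (p - 1) ≤ c / l := (Nat.le_div_iff_mul_le hl0).mpr hcase3
      have hvB : coinA l p j = (p + (j - l) * (p - 1)) * l := coinA_big hl (by omega) hj
      have hbest : bestCoin (coinA l p) j c = (p + (j - l) * (p - 1)) * l := by
        have h2a : (p + (j - l) * (p - 1)) * l ≤ c / l * l :=
          Nat.mul_le_mul_right l hQB
        have h2b : c / l * l ≤ c := Nat.div_mul_le_self c l
        have h3 : ∀ i, i ≤ j → coinA l p i ≤ c → coinA l p i ≤ coinA l p j := by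
          intro i hi hic
          rw [hvB]
          by_cases hil : i ≤ l - 1
          · rw [coinA_small hil]
            have : 1 * l ≤ (p + (j - l) * (p - 1)) * l :=
              Nat.mul_le_mul_right l (by omega)
            omega
          · rw [coinA_big hl (by omega) (by omega)]
            refine Nat.mul_le_mul_right l ?_
            have : (i - l) * (p - 1) ≤ (j - l) * (p - 1) :=
              Nat.mul_le_mul_right (p - 1) (by omega)
            omega
        have := bestCoin_spec (a := coinA l p) (k := j) (c := c) (j0 := j)
          le_rfl (by omega) h3
        omega
      have hBl1 : 1 ≤ (p + (j - l) * (p - 1)) * l := Nat.mul_pos (by omega) hl0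
      rw [grd_step_s17 hbest (by omega) hc]
      have hsubmul : (c / l - (p + (j - l) * (p - 1))) * l
          = c / l * l - (p + (j - l) * (p - 1)) * l := Nat.sub_mul _ _ l
      have hBQl : (p + (j - l) * (p - 1)) * l ≤ c / l * l := Nat.mul_le_mul_right l hQB
      obtain ⟨hdiv, hmod⟩ := dm (show c - (p + (j - l) * (p - 1)) * l
        = (c / l - (p + (j - l) * (p - 1))) * l + c % l by omega) hrl
      rw [ih (c - (p + (j - l) * (p - 1)) * l) (by omega)]
      unfold Gg FF
      rw [hdiv, hmod]
      obtain ⟨hdiv2, hmod2⟩ := dm_sub (show 0 < p + (j - l) * (p - 1) by omega) hQB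
      rw [hdiv2, hmod2]
      have h1 : 1 ≤ c / l / (p + (j - l) * (p - 1)) :=
        (Nat.one_le_div_iff (by omega)).mpr hQB
      omega


lemma orderly_small {l p j : ℕ} (hl : 2 ≤ l) (hj : j ≤ l - 1) : Orderly (coinA l p) j := by
  have h1 : coinA l p 0 = 1 := by rw [coinA_small (by omega)]
  apply orderly_of_step h1
  intro u i hi
  rw [grd_eq_A hl hj, grd_eq_A hl hj, coinA_small (by omega)]
  exact Gg_small_step (F0 := id) (n := j + 1) (v := i + 1) (by omega) (fun Q => le_rfl)
    (by omega) (by omega) u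

lemma orderly_big {l p j : ℕ} (hl : 2 ≤ l) (hp : 2 ≤ p) (hj : l ≤ j) :
    Orderly (coinA l p) j := by
  have h1 : coinA l p 0 = 1 := by rw [coinA_small (by omega)]
  apply orderly_of_step h1
  intro u i hi
  rw [grd_eq_B hl hp hj, grd_eq_B hl hp hj]
  by_cases hil : i ≤ l - 1
  · rw [coinA_small hil]
    exact Gg_small_step (n := l) (v := i + 1) (by omega)
      (fun Q => K1 hp (by omega) Q) (by omega) (by omega) u
  · rw [coinA_big (i := i) hl (by omega) (by omega)]
    exact Gg_big_step (n := l) (β := p + (i - l) * (p - 1)) (by omega)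
      (fun Q => K2 hp (show i - l ≤ j - l by omega) Q) u

/-- For `m > l ≥ 2` and `p ≥ 2`, the currency `A_{l,m}(p)` with coins
`1, 2, …, l, pl, (2p-1)l, (3p-2)l, …, ((m-l+1)p-(m-l))l` is totally orderly;
moreover if `p > m - l` then `⌈a m / a l⌉ = m - l + 1`. -/
theorem A_family (l m p : ℕ) (hl : 2 ≤ l) (hlm : l < m) (hp : 2 ≤ p) :
    (∀ j ≤ m, Orderly (fun i => if i ≤ l - 1 then i + 1
      else ((i - l + 1) * p - (i - l)) * l) j) ∧
    (m - l < p →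
      (((fun i => if i ≤ l - 1 then i + 1
          else ((i - l + 1) * p - (i - l)) * l) m) +
        ((fun i => if i ≤ l - 1 then i + 1
          else ((i - l + 1) * p - (i - l)) * l) l) - 1) /
        ((fun i => if i ≤ l - 1 then i + 1
          else ((i - l + 1) * p - (i - l)) * l) l) = m - l + 1) := by
  constructor
  · intro j hj
    by_cases hjl : j ≤ l - 1
    · exact orderly_small hl hjl
    · exact orderly_big hl hp (by omega)
  · intro hmlp
    show ((if m ≤ l - 1 then m + 1 else ((m - l + 1) * p - (m - l)) * l) +
        (if l ≤ l - 1 then l + 1 else ((l - l + 1) * p - (l - l)) * l) - 1) /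
        (if l ≤ l - 1 then l + 1 else ((l - l + 1) * p - (l - l)) * l) = m - l + 1
    rw [if_neg (show ¬ m ≤ l - 1 by omega), if_neg (show ¬ l ≤ l - 1 by omega)]
    have e : (l - l + 1) * p - (l - l) = p := by simp
    rw [e]
    have hs1 : 1 ≤ m - l := by omega
    have hA : ((m - l + 1) * p - (m - l)) * l + (m - l) * l = ((m - l + 1) * p) * l := by
      rw [← Nat.add_mul, Nat.sub_add_cancel (by
        have : m - l + 1 ≤ (m - l + 1) * p := Nat.le_mul_of_pos_right _ (by omega)
        omega)]
    have h5 : ((m - l + 1) * p) * l = (m - l + 1) * (p * l) := by ring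
    have h6 : (p - (m - l)) * l + (m - l) * l = p * l := by
      rw [← Nat.add_mul, Nat.sub_add_cancel (by omega)]
    have h8 : 1 ≤ (p - (m - l)) * l := Nat.mul_pos (by omega) (by omega)
    have h9 : 1 ≤ (m - l) * l := Nat.mul_pos (by omega) (by omega)
    have h7 : (m - l + 1 + 1) * (p * l) = (m - l + 1) * (p * l) + p * l := by ring
    apply Nat.div_eq_of_lt_le
    · omega
    · omega
end
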